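/- For r > 0 with r ≠ 1, the three vectors v_H = −4X⁴ + 4r²Y⁴, v_P = −4X³Y − 2(r²+1)XY³, v_E = 2(r²−1)X³Y + 2(r²−1)XY³ satisfy: q(v_H) < 0, B(v_H, v_P) = 0, B(v_H, v_E) = 0, and the plane spanned by {v_P, v_E} has signature (1,1). Hence the span of {v_H, v_P, v_E} is a 3-dimensional subspace of signature (2,1). -/

import Mathlib

/-- Coefficient convention: `a 0, a 1, a 2, a 3, a 4` are the coefficients of
`X⁴, X³Y, X²Y², XY³, Y⁴` respectively (so `a 0 = a₄, …, a 4 = a₀` in the paper's notation). -/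
noncomputable def qq (a : Fin 5 → ℝ) : ℝ := 2 * a 0 * a 4 - (1/2) * a 3 * a 1 + (1/6) * (a 2)^2

/-- The polarization of `qq`. -/
noncomputable def bb (f g : Fin 5 → ℝ) : ℝ := (1/2) * (qq (f + g) - qq f - qq g)

/-- Evaluation of the quartic with coefficient vector `a` at `(x, y)`. -/
noncomputable def ev (a : Fin 5 → ℝ) (x y : ℝ) : ℝ :=
  a 0 * x^4 + a 1 * x^3 * y + a 2 * x^2 * y^2 + a 3 * x * y^3 + a 4 * y^4

/-- For `r > 0`, `r ≠ 1`, the tangent vectors `v_H = −4X⁴ + 4r²Y⁴`,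
`v_P = −4X³Y − 2(r²+1)XY³`, `v_E = 2(r²−1)X³Y + 2(r²−1)XY³` at `(X²+Y²)(X²+r²Y²)` satisfy:
`q(v_H) < 0`, `v_H ⊥ v_P`, `v_H ⊥ v_E`, the plane `span{v_P, v_E}` is nondegenerate
indefinite (signature (1,1)), and `span{v_H, v_P, v_E}` is 3-dimensional of
signature (2,1) (two negative directions, one positive). -/
theorem stmt_13 (r : ℝ) (hr : 0 < r) (hr1 : r ≠ 1) :
    let vH : Fin 5 → ℝ := ![-4, 0, 0, 0, 4 * r^2]
    let vP : Fin 5 → ℝ := ![0, -4, 0, -2 * (r^2 + 1), 0]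
    let vE : Fin 5 → ℝ := ![0, 2 * (r^2 - 1), 0, 2 * (r^2 - 1), 0]
    qq vH < 0 ∧ bb vH vP = 0 ∧ bb vH vE = 0 ∧
    LinearIndependent ℝ ![vP, vE] ∧
    qq vP * qq vE - (bb vP vE)^2 < 0 ∧
    (Module.finrank ℝ (Submodule.span ℝ {vH, vP, vE}) = 3 ∧
      ∃ N P : Submodule ℝ (Fin 5 → ℝ),
        N ⊔ P = Submodule.span ℝ {vH, vP, vE} ∧
        Module.finrank ℝ N = 2 ∧ Module.finrank ℝ P = 1 ∧
        (∀ v ∈ N, v ≠ 0 → qq v < 0) ∧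
        (∀ v ∈ P, v ≠ 0 → 0 < qq v)) := by
  intro vH vP vE
  have hne : r^2 - 1 ≠ 0 := by
    intro h
    have h2 : (r - 1) * (r + 1) = 0 := by ring_nf; linarith
    rcases mul_eq_zero.1 h2 with h3 | h3
    · exact hr1 (by linarith)
    · linarith
  have hrsq : 0 < r^2 := by positivity
  have h4 : 0 < (r^2 - 1)^2 := by positivity
  refine ⟨?_, ?_, ?_, ?_, ?_, ?_⟩
  · -- qq vH < 0
    simp only [qq, vH, Matrix.cons_val_zero, Matrix.cons_val_one, Matrix.head_cons,
      Matrix.cons_val_two, Matrix.tail_cons, Matrix.cons_val_three, Matrix.cons_val_four]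
    nlinarith
  · simp only [bb, qq, vH, vP, Pi.add_apply, Matrix.cons_val_zero, Matrix.cons_val_one,
      Matrix.head_cons, Matrix.cons_val_two, Matrix.tail_cons, Matrix.cons_val_three,
      Matrix.cons_val_four]
    ring
  · simp only [bb, qq, vH, vE, Pi.add_apply, Matrix.cons_val_zero, Matrix.cons_val_one,
      Matrix.head_cons, Matrix.cons_val_two, Matrix.tail_cons, Matrix.cons_val_three,
      Matrix.cons_val_four]
    ring
  · -- LinearIndependent ![vP, vE]
    rw [LinearIndependent.pair_iff]
    intro s t hst
    have h1 := congrFun hst 1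
    have h3 := congrFun hst 3
    simp only [vP, vE, Pi.add_apply, Pi.smul_apply, smul_eq_mul, Matrix.cons_val_one,
      Matrix.head_cons, Matrix.cons_val_three, Matrix.tail_cons, Pi.zero_apply,
      Matrix.cons_val_zero] at h1 h3
    constructor
    · nlinarith
    · nlinarith
  · simp only [bb, qq, vP, vE, Pi.add_apply, Matrix.cons_val_zero, Matrix.cons_val_one,
      Matrix.head_cons, Matrix.cons_val_two, Matrix.tail_cons, Matrix.cons_val_three,
      Matrix.cons_val_four]
    nlinarith [sq_nonneg (r^2-1), sq_nonneg ((r^2-1)^2)]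
  · set n2 : Fin 5 → ℝ := ![0, 1, 0, 1, 0] with hn2
    set p : Fin 5 → ℝ := ![0, 1, 0, -1, 0] with hp
    -- expression facts
    have hvP : vP = (-(r^2+3)) • n2 + (r^2-1) • p := by
      funext i; fin_cases i <;>
        simp [vP, n2, p] <;> ring
    have hvE : vE = (2*(r^2-1)) • n2 := by
      funext i; fin_cases i <;> simp [vE, n2]
    have hn2' : n2 = (1/(2*(r^2-1))) • vE := by
      rw [hvE, smul_smul]
      rw [one_div, inv_mul_cancel₀ (by intro h; apply hne; nlinarith), one_smul]
    have hp' : p = (1/(r^2-1)) • vP + ((r^2+3)/(2*(r^2-1)^2)) • vE := by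
      funext i; fin_cases i <;>
        simp [vP, vE, p] <;> field_simp <;> ring
    -- span equality
    have hspan : Submodule.span ℝ {vH, n2, p} = Submodule.span ℝ {vH, vP, vE} := by
      apply le_antisymm
      · rw [Submodule.span_le]
        rintro x hx
        simp only [Set.mem_insert_iff, Set.mem_singleton_iff] at hx
        rcases hx with rfl | rfl | rfl
        · exact Submodule.subset_span (by simp)
        · rw [hn2']
          exact Submodule.smul_mem _ _ (Submodule.subset_span (by simp))
        · rw [hp']
          exact Submodule.add_mem _
            (Submodule.smul_mem _ _ (Submodule.subset_span (by simp)))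
            (Submodule.smul_mem _ _ (Submodule.subset_span (by simp)))
      · rw [Submodule.span_le]
        rintro x hx
        simp only [Set.mem_insert_iff, Set.mem_singleton_iff] at hx
        rcases hx with rfl | rfl | rfl
        · exact Submodule.subset_span (by simp)
        · rw [hvP]
          exact Submodule.add_mem _
            (Submodule.smul_mem _ _ (Submodule.subset_span (by simp)))
            (Submodule.smul_mem _ _ (Submodule.subset_span (by simp)))
        · rw [hvE]
          exact Submodule.smul_mem _ _ (Submodule.subset_span (by simp))
    have hli3 : LinearIndependent ℝ ![vH, n2, p] := by
      rw [Fintype.linearIndependent_iff]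
      intro g hg
      have h0 := congrFun hg 0
      have h1 := congrFun hg 1
      have h3 := congrFun hg 3
      simp only [Fin.sum_univ_three, vH, n2, p, Pi.add_apply, Pi.smul_apply, smul_eq_mul,
        Matrix.cons_val_zero, Matrix.cons_val_one, Matrix.head_cons, Matrix.cons_val_three,
        Matrix.tail_cons, Pi.zero_apply, Matrix.cons_val_two] at h0 h1 h3
      intro i
      fin_cases i <;> simp <;> linarith
    have hrank3 : Module.finrank ℝ (Submodule.span ℝ ({vH, vP, vE} : Set (Fin 5 → ℝ))) = 3 := by
      rw [← hspan]
      have : ({vH, n2, p} : Set (Fin 5 → ℝ)) = Set.range ![vH, n2, p] := by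
        ext x; simp [Matrix.range_cons, Matrix.range_empty]; tauto
      rw [this, finrank_span_eq_card hli3]
      simp
    refine ⟨hrank3, Submodule.span ℝ {vH, n2}, Submodule.span ℝ {p}, ?_, ?_, ?_, ?_, ?_⟩
    · rw [← hspan, ← Submodule.span_union]
      congr 1
      ext x; simp [Set.mem_insert_iff]; tauto
    · have hli2 : LinearIndependent ℝ ![vH, n2] := by
        rw [LinearIndependent.pair_iff]
        intro s t hst
        have h0 := congrFun hst 0
        have h1 := congrFun hst 1
        simp only [vH, n2, Pi.add_apply, Pi.smul_apply, smul_eq_mul, Matrix.cons_val_zero,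
          Matrix.cons_val_one, Matrix.head_cons, Pi.zero_apply] at h0 h1
        constructor <;> linarith
      have : ({vH, n2} : Set (Fin 5 → ℝ)) = Set.range ![vH, n2] := by
        ext x; simp [Matrix.range_cons, Matrix.range_empty]; tauto
      rw [this, finrank_span_eq_card hli2]
      simp
    · have hp0 : p ≠ 0 := by
        intro h
        have := congrFun h 1
        simp [p] at this
      exact finrank_span_singleton hp0
    · intro v hv hv0
      rw [Submodule.mem_span_pair] at hv
      obtain ⟨a, b, rfl⟩ := hv
      have hab : a ≠ 0 ∨ b ≠ 0 := by
        by_contra h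
        push_neg at h
        exact hv0 (by simp [h.1, h.2])
      have hq : qq (a • vH + b • n2) = -32 * r^2 * a^2 - (1/2) * b^2 := by
        simp only [qq, vH, n2, Pi.add_apply, Pi.smul_apply, smul_eq_mul, Matrix.cons_val_zero,
          Matrix.cons_val_one, Matrix.head_cons, Matrix.cons_val_two, Matrix.tail_cons,
          Matrix.cons_val_three, Matrix.cons_val_four]
        ring
      rw [hq]
      rcases hab with ha | hb
      · have ha2 : 0 < a^2 := by positivity
        nlinarith [sq_nonneg b, mul_pos hrsq ha2]
      · have hb2 : 0 < b^2 := by positivity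
        nlinarith [sq_nonneg a, mul_nonneg hrsq.le (sq_nonneg a)]
    · intro v hv hv0
      rw [Submodule.mem_span_singleton] at hv
      obtain ⟨a, rfl⟩ := hv
      have ha : a ≠ 0 := by
        intro h; exact hv0 (by simp [h])
      have hq : qq (a • p) = (1/2) * a^2 := by
        simp only [qq, p, Pi.smul_apply, smul_eq_mul, Matrix.cons_val_zero, Matrix.cons_val_one,
          Matrix.head_cons, Matrix.cons_val_two, Matrix.tail_cons, Matrix.cons_val_three,
          Matrix.cons_val_four]
        ring
      rw [hq]
      positivity
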